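/- Let α, β > 0 and (v, θ, ω) ∈ ℝ³ with H₁(v,θ,ω)·H₂(v,θ,ω) < 0. Set t₁ = β|ω|·H₂(v,θ,ω)/(αω|v|), t₂ = |v|/β, t₃ = |ω|/α − t₁, and let s₁, s₂ ∈ {−1,1} satisfy s₁·ω = −|ω| and s₂·v = −|v|. Then t₁ > 0, t₃ > 0, and the α-β-α (same-sign) final state from (v, θ, ω) with durations t₁, t₂, t₃ and signs s₁, s₂ equals (0, 0, 0). -/

import Mathlib

noncomputable def H1 (α v θ ω : ℝ) : ℝ := 2 * α * θ + ω * |ω|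

noncomputable def H2 (α β v θ ω : ℝ) : ℝ := ω * |ω| / (2 * α) + θ + ω * |v| / β

/-- The α-β-α (same-sign) final state `(v_f, θ_f, ω_f)`: angular acceleration `s₁ * α`
for time `t₁`, linear acceleration `s₂ * β` for time `t₂`, angular acceleration
`s₁ * α` for time `t₃`. -/
noncomputable def abaFinal (α β v θ ω t₁ t₂ t₃ s₁ s₂ : ℝ) : ℝ × ℝ × ℝ :=
  (v + s₂ * β * t₂,
   θ + ω * t₁ + s₁ * α * t₁ ^ 2 / 2 + (ω + s₁ * α * t₁) * (t₂ + t₃) + s₁ * α * t₃ ^ 2 / 2,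
   ω + s₁ * α * (t₁ + t₃))

set_option maxHeartbeats 2000000 in
theorem stmt7 (α β v θ ω : ℝ) (hα : 0 < α) (hβ : 0 < β)
    (h : H1 α v θ ω * H2 α β v θ ω < 0)
    (t₁ t₂ t₃ : ℝ)
    (ht₁ : t₁ = β * |ω| * H2 α β v θ ω / (α * ω * |v|))
    (ht₂ : t₂ = |v| / β)
    (ht₃ : t₃ = |ω| / α - t₁)
    (s₁ s₂ : ℝ) (hs₁ : s₁ = -1 ∨ s₁ = 1) (hs₂ : s₂ = -1 ∨ s₂ = 1)
    (hs₁ω : s₁ * ω = -|ω|) (hs₂v : s₂ * v = -|v|) :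
    0 < t₁ ∧ 0 < t₃ ∧ abaFinal α β v θ ω t₁ t₂ t₃ s₁ s₂ = (0, 0, 0) := by
  have hω : ω ≠ 0 := by
    rintro rfl
    simp only [H1, H2, abs_zero, mul_zero, zero_mul, zero_div, add_zero, zero_add] at h
    nlinarith [mul_nonneg hα.le (mul_self_nonneg θ)]
  have hv : v ≠ 0 := by
    rintro rfl
    simp only [H1, H2, abs_zero, mul_zero, zero_mul, zero_div, add_zero] at h
    have e : (2*α) * ((2*α*θ + ω*|ω|) * (ω*|ω|/(2*α) + θ)) = (2*α*θ + ω*|ω|)^2 := by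
      field_simp
      ring
    have hlt := mul_neg_of_pos_of_neg (show (0:ℝ) < 2*α by linarith) h
    rw [e] at hlt
    exact (sq_nonneg _).not_gt hlt
  have hvabs : (0:ℝ) < |v| := abs_pos.mpr hv
  have hωabs : (0:ℝ) < |ω| := abs_pos.mpr hω
  have hω2 : (0:ℝ) < ω ^ 2 := by positivity
  have hrelω : 2 * α * (ω * H2 α β v θ ω) * β
      = (ω * H1 α v θ ω) * β + 2 * α * (ω ^ 2 * |v|) := by
    unfold H1 H2
    field_simp
    ring
  have hprod : (ω * H1 α v θ ω) * (ω * H2 α β v θ ω) < 0 := by nlinarith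
  have hB : 0 < ω * H2 α β v θ ω := by
    by_contra hc
    push_neg at hc
    have h1 : 0 ≤ α * -(ω * H2 α β v θ ω) * β := mul_nonneg (mul_nonneg hα.le (neg_nonneg.2 hc)) hβ.le
    have h2 : 0 < α * (ω ^ 2 * |v|) := by positivity
    have hA' : ω * H1 α v θ ω < 0 := by nlinarith
    nlinarith
  have hA : ω * H1 α v θ ω < 0 := by
    rcases lt_trichotomy (ω * H1 α v θ ω) 0 with h'|h'|h'
    · exact h'
    · rw [h'] at hprod; simp at hprod
    · nlinarith
  have hkey : β * (ω * H2 α β v θ ω) < ω ^ 2 * |v| := by nlinarith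
  have ht₁' : t₁ = β * |ω| * (ω * H2 α β v θ ω) / (α * ω ^ 2 * |v|) := by
    rw [ht₁]
    field_simp
  have hpos1 : 0 < t₁ := by
    rw [ht₁']
    positivity
  refine ⟨hpos1, ?_, ?_⟩
  · rw [ht₃, sub_pos, ht₁', div_lt_div_iff₀ (by positivity) (by positivity)]
    nlinarith [mul_lt_mul_of_pos_left hkey (mul_pos hα hωabs)]
  · have hα' : α ≠ 0 := ne_of_gt hα
    have hβ' : β ≠ 0 := ne_of_gt hβ
    subst ht₂ ht₃
    unfold H2 at ht₁
    unfold abaFinal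
    rcases hs₁ with rfl | rfl <;> rcases hs₂ with rfl | rfl
    · have hW : |ω| = ω := by linarith
      have hV : |v| = v := by linarith
      rw [hW, hV] at ht₁ ⊢
      have hθ : θ = α*v*t₁/β - ω*v/β - ω^2/(2*α) := by
        rw [ht₁]; field_simp; ring
      rw [hθ]
      simp only [Prod.mk.injEq]
      refine ⟨?_, ?_, ?_⟩ <;> field_simp <;> ring
    · have hW : |ω| = ω := by linarith
      have hV : |v| = -v := by linarith
      rw [hW, hV] at ht₁ ⊢
      have hθ : θ = -(α*v*t₁/β) + ω*v/β - ω^2/(2*α) := by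
        rw [ht₁]; field_simp; ring
      rw [hθ]
      simp only [Prod.mk.injEq]
      refine ⟨?_, ?_, ?_⟩ <;> field_simp <;> ring
    · have hW : |ω| = -ω := by linarith
      have hV : |v| = v := by linarith
      rw [hW, hV] at ht₁ ⊢
      have hθ : θ = -(α*v*t₁/β) - ω*v/β + ω^2/(2*α) := by
        rw [ht₁]; field_simp; ring
      rw [hθ]
      simp only [Prod.mk.injEq]
      refine ⟨?_, ?_, ?_⟩ <;> field_simp <;> ring
    · have hW : |ω| = -ω := by linarith
      have hV : |v| = -v := by linarith
      rw [hW, hV] at ht₁ ⊢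
      have hθ : θ = α*v*t₁/β + ω*v/β + ω^2/(2*α) := by
        rw [ht₁]; field_simp; ring
      rw [hθ]
      simp only [Prod.mk.injEq]
      refine ⟨?_, ?_, ?_⟩ <;> field_simp <;> ring
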